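/- Let N ≥ 1, let γ ∈ [0,1), let K satisfy 1 ≤ K ≤ N, and suppose each per-arm transition kernel satisfies P_i(σ,1,1) ≥ P_i(σ,0,1) for every σ ∈ {0,1}. Fix a state s ∈ {0,1}^N. Suppose V : {0,1}^N → ℝ is monotone, submodular, and nonnegative, and suppose the map a ↦ R(s,a) is monotone, submodular, and nonnegative. Define Q(a) := R(s,a) + γ Σ_{s' ∈ {0,1}^N} P(s,a,s') V(s'). Construct the greedy action â as follows: starting from the empty set of arms, for K rounds add to the current set an arm i not yet chosen that maximizes Q evaluated at the indicator vector of the current set together with i; let â be the indicator vector of the resulting set of K arms. Then Q(â) ≥ (1 − 1/e) · max{ Q(a) : a ∈ {0,1}^N, Σ_i a_i ≤ K }. -/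

import Mathlib

/-- Number of arms pulled by a binary action vector. -/
def pulls {N : ℕ} (a : Fin N → Bool) : ℕ := ∑ i, if a i then 1 else 0

/-- Joint transition probability: product of per-arm kernels. -/
def jointP {N : ℕ} (P : Fin N → Bool → Bool → Bool → ℝ)
    (s a s' : Fin N → Bool) : ℝ :=
  ∏ i, P i (s i) (a i) (s' i)

/-- Submodularity of a function on the Boolean cube (with coordinatewise ⊔, ⊓). -/
def Submod {N : ℕ} (f : (Fin N → Bool) → ℝ) : Prop :=
  ∀ x y, f (x ⊔ y) + f (x ⊓ y) ≤ f x + f y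

/-- Indicator vector of a set of arms. -/
def ind {N : ℕ} (A : Finset (Fin N)) : Fin N → Bool := fun i => decide (i ∈ A)

/-- Greedy selection of arm sets: at each round, add an arm (not yet chosen)
maximizing the value of the current set together with that arm. -/
noncomputable def greedy {N : ℕ} (Q : Finset (Fin N) → ℝ) : ℕ → Finset (Fin N)
  | 0 => ∅
  | k + 1 =>
    let A := greedy Q k
    if h : (Finset.univ \ A).Nonempty then
      insert
        (Classical.choose
          (Finset.exists_max_image (Finset.univ \ A) (fun i => Q (insert i A)) h)) A
    else A

noncomputable def mext {N : ℕ} (f : (Fin N → Bool) → ℝ) (p : Fin N → ℝ) : ℝ :=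
  ∑ x : Fin N → Bool, (∏ i, if x i then p i else 1 - p i) * f x

lemma mext_zero (f : (Fin 0 → Bool) → ℝ) (p : Fin 0 → ℝ) :
    mext f p = f (fun i => i.elim0) := by
  unfold mext
  rw [Fintype.sum_eq_single (fun i : Fin 0 => i.elim0)]
  · simp
  · intro x hx; exact absurd (funext fun i => i.elim0) hx

lemma mext_succ {N : ℕ} (f : (Fin (N+1) → Bool) → ℝ) (p : Fin (N+1) → ℝ) :
    mext f p = p 0 * mext (fun x => f (Fin.cons true x)) (p ∘ Fin.succ)
      + (1 - p 0) * mext (fun x => f (Fin.cons false x)) (p ∘ Fin.succ) := by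
  unfold mext
  rw [← Equiv.sum_comp (Fin.consEquiv (fun _ : Fin (N+1) => Bool))
    (fun x : Fin (N+1) → Bool => (∏ i, if x i then p i else 1 - p i) * f x)]
  rw [Fintype.sum_prod_type]
  rw [Fintype.sum_bool]
  rw [Finset.mul_sum, Finset.mul_sum]
  congr 1 <;>
  · refine Finset.sum_congr rfl fun x _ => ?_
    show (∏ i, if (Fin.cons _ x : Fin (N+1) → Bool) i then p i else 1 - p i) * f (Fin.cons _ x) = _
    rw [Fin.prod_univ_succ]
    simp [mul_assoc, Function.comp]

lemma weight_nonneg {N : ℕ} {p : Fin N → ℝ} (hp : ∀ i, 0 ≤ p i ∧ p i ≤ 1)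
    (x : Fin N → Bool) : 0 ≤ ∏ i, if x i then p i else 1 - p i := by
  refine Finset.prod_nonneg fun i _ => ?_
  rcases hp i with ⟨h0, h1⟩
  cases x i <;> simp [h0, h1]

lemma mext_le_mext {N : ℕ} {f g : (Fin N → Bool) → ℝ} {p : Fin N → ℝ}
    (hp : ∀ i, 0 ≤ p i ∧ p i ≤ 1) (hfg : ∀ x, f x ≤ g x) :
    mext f p ≤ mext g p :=
  Finset.sum_le_sum fun x _ => mul_le_mul_of_nonneg_left (hfg x) (weight_nonneg hp x)

lemma mext_nonneg {N : ℕ} {f : (Fin N → Bool) → ℝ} {p : Fin N → ℝ}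
    (hp : ∀ i, 0 ≤ p i ∧ p i ≤ 1) (hf : ∀ x, 0 ≤ f x) : 0 ≤ mext f p :=
  Finset.sum_nonneg fun x _ => mul_nonneg (weight_nonneg hp x) (hf x)

lemma cons_le_cons {N : ℕ} {b c : Bool} (hbc : b ≤ c) {x y : Fin N → Bool}
    (h : x ≤ y) : (Fin.cons b x : Fin (N+1) → Bool) ≤ Fin.cons c y := fun i => by
  refine Fin.cases ?_ ?_ i
  · simpa using hbc
  · intro j; simpa using h j

lemma cons_sup {N : ℕ} (u v : Bool) (x y : Fin N → Bool) :
    (Fin.cons u x : Fin (N+1) → Bool) ⊔ Fin.cons v y = Fin.cons (u ⊔ v) (x ⊔ y) := by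
  funext i
  refine Fin.cases ?_ ?_ i <;> simp [Pi.sup_apply]

lemma cons_inf {N : ℕ} (u v : Bool) (x y : Fin N → Bool) :
    (Fin.cons u x : Fin (N+1) → Bool) ⊓ Fin.cons v y = Fin.cons (u ⊓ v) (x ⊓ y) := by
  funext i
  refine Fin.cases ?_ ?_ i <;> simp [Pi.inf_apply]

lemma mext_mono : ∀ {N : ℕ} {f : (Fin N → Bool) → ℝ}, Monotone f →
    ∀ {p q : Fin N → ℝ}, (∀ i, 0 ≤ p i ∧ p i ≤ 1) → (∀ i, 0 ≤ q i ∧ q i ≤ 1) →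
    p ≤ q → mext f p ≤ mext f q := by
  intro N
  induction N with
  | zero => intro f _ p q _ _ _; rw [mext_zero, mext_zero]
  | succ n IH =>
    intro f hf p q hp hq hpq
    rw [mext_succ, mext_succ]
    set r := p ∘ Fin.succ with hr
    set t := q ∘ Fin.succ with ht
    have hrb : ∀ i, 0 ≤ r i ∧ r i ≤ 1 := fun i => hp i.succ
    have htb : ∀ i, 0 ≤ t i ∧ t i ≤ 1 := fun i => hq i.succ
    have hrt : r ≤ t := fun i => hpq i.succ
    have hf1 : Monotone (fun x => f (Fin.cons true x)) :=
      fun x y h => hf (cons_le_cons le_rfl h)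
    have hf0 : Monotone (fun x => f (Fin.cons false x)) :=
      fun x y h => hf (cons_le_cons le_rfl h)
    have I1 := IH hf1 hrb htb hrt
    have I0 := IH hf0 hrb htb hrt
    have hle : mext (fun x => f (Fin.cons false x)) t ≤ mext (fun x => f (Fin.cons true x)) t :=
      mext_le_mext htb fun x => hf (cons_le_cons (by simp) le_rfl)
    have h01 : p 0 ≤ q 0 := hpq 0
    have hp0 := hp 0
    have hq0 := hq 0
    nlinarith [I1, I0, hle, h01, hp0.1, hp0.2, hq0.1, hq0.2]

lemma fourfun : ∀ {N : ℕ} (f g h k : (Fin N → Bool) → ℝ),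
    (∀ x y, f (x ⊔ y) + g (x ⊓ y) ≤ h x + k y) →
    ∀ (p q : Fin N → ℝ), (∀ i, 0 ≤ p i ∧ p i ≤ 1) → (∀ i, 0 ≤ q i ∧ q i ≤ 1) →
    mext f (p ⊔ q) + mext g (p ⊓ q) ≤ mext h p + mext k q := by
  intro N
  induction N with
  | zero =>
    intro f g h k hyp p q _ _
    rw [mext_zero, mext_zero, mext_zero, mext_zero]
    have := hyp (fun i => i.elim0) (fun i => i.elim0)
    simpa using this
  | succ n IH =>
    intro f g h k hyp p q hp hq
    have hsup0 : (p ⊔ q) 0 = p 0 ⊔ q 0 := rfl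
    have hsupc : (p ⊔ q) ∘ Fin.succ = (p ∘ Fin.succ) ⊔ (q ∘ Fin.succ) := rfl
    have hinf0 : (p ⊓ q) 0 = p 0 ⊓ q 0 := rfl
    have hinfc : (p ⊓ q) ∘ Fin.succ = (p ∘ Fin.succ) ⊓ (q ∘ Fin.succ) := rfl
    rw [mext_succ f, mext_succ g, mext_succ h, mext_succ k, hsup0, hsupc, hinf0, hinfc]
    set r := p ∘ Fin.succ with hrdef
    set t := q ∘ Fin.succ with htdef
    have hrb : ∀ i, 0 ≤ r i ∧ r i ≤ 1 := fun i => hp i.succ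
    have htb : ∀ i, 0 ≤ t i ∧ t i ≤ 1 := fun i => hq i.succ
    -- restricted functions
    have hyp' : ∀ (u v : Bool) (x y : Fin n → Bool),
        f (Fin.cons (u ⊔ v) (x ⊔ y)) + g (Fin.cons (u ⊓ v) (x ⊓ y))
          ≤ h (Fin.cons u x) + k (Fin.cons v y) := by
      intro u v x y
      have := hyp (Fin.cons u x) (Fin.cons v y)
      rwa [cons_sup, cons_inf] at this
    have I11 := IH (fun x => f (Fin.cons true x)) (fun x => g (Fin.cons true x))
      (fun x => h (Fin.cons true x)) (fun x => k (Fin.cons true x))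
      (fun x y => by simpa using hyp' true true x y) r t hrb htb
    have I00 := IH (fun x => f (Fin.cons false x)) (fun x => g (Fin.cons false x))
      (fun x => h (Fin.cons false x)) (fun x => k (Fin.cons false x))
      (fun x y => by simpa using hyp' false false x y) r t hrb htb
    have I01 := IH (fun x => f (Fin.cons true x)) (fun x => g (Fin.cons false x))
      (fun x => h (Fin.cons false x)) (fun x => k (Fin.cons true x))
      (fun x y => by simpa using hyp' false true x y) r t hrb htb
    have I10 := IH (fun x => f (Fin.cons true x)) (fun x => g (Fin.cons false x))
      (fun x => h (Fin.cons true x)) (fun x => k (Fin.cons false x))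
      (fun x y => by simpa using hyp' true false x y) r t hrb htb
    set A1 := mext (fun x => f (Fin.cons true x)) (r ⊔ t)
    set A0 := mext (fun x => f (Fin.cons false x)) (r ⊔ t)
    set B1 := mext (fun x => g (Fin.cons true x)) (r ⊓ t)
    set B0 := mext (fun x => g (Fin.cons false x)) (r ⊓ t)
    set H1 := mext (fun x => h (Fin.cons true x)) r
    set H0 := mext (fun x => h (Fin.cons false x)) r
    set K1 := mext (fun x => k (Fin.cons true x)) t
    set K0 := mext (fun x => k (Fin.cons false x)) t
    set a := p 0
    set b := q 0
    have hp0 := hp 0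
    have hq0 := hq 0
    rcases le_total a b with hab | hab
    · rw [sup_eq_right.mpr hab, inf_eq_left.mpr hab]
      have c1 : a * (A1 + B1) ≤ a * (H1 + K1) := mul_le_mul_of_nonneg_left I11 hp0.1
      have c2 : (1 - b) * (A0 + B0) ≤ (1 - b) * (H0 + K0) :=
        mul_le_mul_of_nonneg_left I00 (by linarith [hq0.2])
      have c3 : (b - a) * (A1 + B0) ≤ (b - a) * (H0 + K1) :=
        mul_le_mul_of_nonneg_left I01 (by linarith)
      nlinarith [c1, c2, c3]
    · rw [sup_eq_left.mpr hab, inf_eq_right.mpr hab]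
      have c1 : b * (A1 + B1) ≤ b * (H1 + K1) := mul_le_mul_of_nonneg_left I11 hq0.1
      have c2 : (1 - a) * (A0 + B0) ≤ (1 - a) * (H0 + K0) :=
        mul_le_mul_of_nonneg_left I00 (by linarith [hp0.2])
      have c3 : (a - b) * (A1 + B0) ≤ (a - b) * (H1 + K0) :=
        mul_le_mul_of_nonneg_left I10 (by linarith)
      nlinarith [c1, c2, c3]

section SetFn
variable {N : ℕ} (F : Finset (Fin N) → ℝ)

lemma marg_sum (hsub : ∀ A B, F (A ∪ B) + F (A ∩ B) ≤ F A + F B) :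
    ∀ (S A : Finset (Fin N)), Disjoint S A →
      F (A ∪ S) ≤ F A + ∑ j ∈ S, (F (insert j A) - F A) := by
  intro S
  induction S using Finset.induction_on with
  | empty => intro A _; simp
  | @insert j S' hj IH =>
    intro A hdisj
    have hjA : j ∉ A := fun h =>
      (Finset.disjoint_left.mp hdisj (Finset.mem_insert_self j S')) h
    have hdisj' : Disjoint S' A :=
      hdisj.mono_left (Finset.subset_insert j S')
    have hjS : j ∉ A ∪ S' := by
      simp only [Finset.mem_union]; push_neg; exact ⟨hjA, hj⟩
    have hunion : (insert j A) ∪ (A ∪ S') = A ∪ insert j S' := by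
      ext x; simp only [Finset.mem_union, Finset.mem_insert]; tauto
    have hinter : (insert j A) ∩ (A ∪ S') = A := by
      ext x
      simp only [Finset.mem_inter, Finset.mem_insert, Finset.mem_union]
      constructor
      · rintro ⟨h1 | h1, h2 | h2⟩ <;> first | assumption | (subst h1; tauto)
      · intro h; exact ⟨Or.inr h, Or.inl h⟩
    have key := hsub (insert j A) (A ∪ S')
    rw [hunion, hinter] at key
    have IH' := IH A hdisj'
    rw [Finset.sum_insert hj]
    linarith

lemma greedy_card : ∀ k, (greedy F k).card ≤ k := by
  intro k
  induction k with
  | zero => simp [greedy]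
  | succ n IH =>
    show (greedy F (n+1)).card ≤ n + 1
    rw [greedy]
    split
    · exact le_trans (Finset.card_insert_le _ _) (by omega)
    · omega

lemma greedy_step (k : ℕ) (h : (Finset.univ \ greedy F k).Nonempty) :
    ∃ c ∈ Finset.univ \ greedy F k,
      greedy F (k+1) = insert c (greedy F k) ∧
      ∀ j ∈ Finset.univ \ greedy F k,
        F (insert j (greedy F k)) ≤ F (insert c (greedy F k)) := by
  obtain ⟨hc, hmax⟩ := Classical.choose_spec
    (Finset.exists_max_image (Finset.univ \ greedy F k)
      (fun i => F (insert i (greedy F k))) h)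
  refine ⟨_, hc, ?_, hmax⟩
  rw [greedy]
  simp only [dif_pos h]

theorem greedy_approx (hmono : ∀ {A B}, A ⊆ B → F A ≤ F B)
    (hsub : ∀ A B, F (A ∪ B) + F (A ∩ B) ≤ F A + F B)
    (hnn : 0 ≤ F ∅) (K : ℕ) (hK1 : 1 ≤ K) (hKN : K ≤ N)
    (B : Finset (Fin N)) (hB : B.card ≤ K) :
    (1 - (Real.exp 1)⁻¹) * F B ≤ F (greedy F K) := by
  have hKpos : (0:ℝ) < K := by exact_mod_cast hK1
  -- per-step inequality
  have step : ∀ k, k < K → F B - F (greedy F (k+1)) ≤ (1 - 1/K) * (F B - F (greedy F k)) := by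
    intro k hk
    set A := greedy F k with hA
    have hcard : A.card ≤ k := greedy_card F k
    have hne : (Finset.univ \ A).Nonempty := by
      rw [Finset.sdiff_nonempty]
      intro hsubset
      have := Finset.card_le_card hsubset
      rw [Finset.card_univ, Fintype.card_fin] at this
      omega
    obtain ⟨c, hc, heq, hmax⟩ := greedy_step F k hne
    have hgk1 : F (greedy F (k+1)) = F (insert c A) := by rw [heq]
    have hmono_step : F A ≤ F (insert c A) := hmono (Finset.subset_insert c A)
    -- telescoping bound
    have htel : F B ≤ F A + ∑ j ∈ B \ A, (F (insert j A) - F A) := by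
      have h1 : F B ≤ F (A ∪ (B \ A)) := hmono (by
        intro x hx
        simp only [Finset.mem_union, Finset.mem_sdiff]
        by_cases hxA : x ∈ A
        · exact Or.inl hxA
        · exact Or.inr ⟨hx, hxA⟩)
      have h2 := marg_sum F hsub (B \ A) A Finset.sdiff_disjoint
      linarith
    have hbound : ∀ j ∈ B \ A, F (insert j A) - F A ≤ F (insert c A) - F A := by
      intro j hj
      have hjA : j ∉ A := (Finset.mem_sdiff.mp hj).2
      have : j ∈ Finset.univ \ A := Finset.mem_sdiff.mpr ⟨Finset.mem_univ j, hjA⟩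
      have := hmax j this
      linarith
    have hsum : ∑ j ∈ B \ A, (F (insert j A) - F A)
        ≤ (B \ A).card * (F (insert c A) - F A) := by
      calc ∑ j ∈ B \ A, (F (insert j A) - F A)
          ≤ ∑ _j ∈ B \ A, (F (insert c A) - F A) := Finset.sum_le_sum hbound
        _ = (B \ A).card * (F (insert c A) - F A) := by
            rw [Finset.sum_const, nsmul_eq_mul]
    have hcardBA : ((B \ A).card : ℝ) ≤ K := by
      have := Finset.card_le_card (Finset.sdiff_subset (s := B) (t := A))
      have : (B \ A).card ≤ K := le_trans this hB
      exact_mod_cast this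
    have hKmul : ((B \ A).card : ℝ) * (F (insert c A) - F A)
        ≤ K * (F (insert c A) - F A) :=
      mul_le_mul_of_nonneg_right hcardBA (by linarith)
    have hmain : F B ≤ F A + K * (F (insert c A) - F A) := by linarith
    rw [hgk1]
    have : (F B - F A) / K ≤ F (insert c A) - F A := by
      rw [div_le_iff₀ hKpos]; linarith
    have expand : (1 - 1/K) * (F B - F A) = (F B - F A) - (F B - F A)/K := by
      field_simp
    rw [expand]
    linarith
  -- geometric decay
  have decay : ∀ k, k ≤ K → F B - F (greedy F k) ≤ (1 - 1/K)^k * (F B - F ∅) := by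
    intro k
    induction k with
    | zero => intro _; simp [greedy]
    | succ n IH =>
      intro hn
      have hn' : n < K := by omega
      have h1 := step n hn'
      have h2 := IH (by omega)
      have hfac : (0:ℝ) ≤ 1 - 1/K := by
        rw [sub_nonneg, div_le_one hKpos]
        exact_mod_cast hK1
      calc F B - F (greedy F (n+1)) ≤ (1 - 1/K) * (F B - F (greedy F n)) := h1
        _ ≤ (1 - 1/K) * ((1 - 1/K)^n * (F B - F ∅)) :=
            mul_le_mul_of_nonneg_left h2 hfac
        _ = (1 - 1/K)^(n+1) * (F B - F ∅) := by ring
  have hd := decay K le_rfl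
  have hfac : (0:ℝ) ≤ 1 - 1/K := by
    rw [sub_nonneg, div_le_one hKpos]
    exact_mod_cast hK1
  have hexp : (1 - 1/(K:ℝ))^K ≤ (Real.exp 1)⁻¹ := by
    have h1 : (1:ℝ) - 1/K ≤ Real.exp (-(1/K)) := by
      have := Real.add_one_le_exp (-(1/(K:ℝ)))
      linarith
    have h2 : (1 - 1/(K:ℝ))^K ≤ (Real.exp (-(1/K)))^K :=
      pow_le_pow_left₀ hfac h1 K
    have h3 : (Real.exp (-(1/(K:ℝ))))^K = Real.exp (-1) := by
      rw [← Real.exp_nat_mul]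
      congr 1
      field_simp
    rw [h3, Real.exp_neg] at h2
    exact h2
  have hBnn : F ∅ ≤ F B := hmono (Finset.empty_subset B)
  have hBpos : 0 ≤ F B := le_trans hnn hBnn
  have hdiff : 0 ≤ F B - F ∅ := by linarith
  have hfin : F B - F (greedy F K) ≤ (Real.exp 1)⁻¹ * F B := by
    calc F B - F (greedy F K) ≤ (1 - 1/K)^K * (F B - F ∅) := hd
      _ ≤ (Real.exp 1)⁻¹ * (F B - F ∅) := mul_le_mul_of_nonneg_right hexp hdiff
      _ ≤ (Real.exp 1)⁻¹ * F B := by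
          have : (0:ℝ) ≤ (Real.exp 1)⁻¹ := by positivity
          nlinarith
  linarith [hfin]

end SetFn
/-- The greedy action computed on the Bellman backup `Q` of a monotone, submodular,
nonnegative continuation value is a `(1 - 1/e)`-approximation of the best
budget-feasible action. -/

theorem stmt_7 {N : ℕ} (hN : 1 ≤ N) (γ : ℝ) (hγ0 : 0 ≤ γ) (hγ1 : γ < 1)
    (K : ℕ) (hK1 : 1 ≤ K) (hKN : K ≤ N)
    (P : Fin N → Bool → Bool → Bool → ℝ)
    (hPnonneg : ∀ i σ α σ', 0 ≤ P i σ α σ')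
    (hPsum : ∀ i σ α, P i σ α false + P i σ α true = 1)
    (hPmono : ∀ i σ, P i σ false true ≤ P i σ true true)
    (s : Fin N → Bool)
    (R : (Fin N → Bool) → (Fin N → Bool) → ℝ)
    (hRmono : Monotone (R s)) (hRsub : Submod (R s)) (hRpos : ∀ a, 0 ≤ R s a)
    (V : (Fin N → Bool) → ℝ)
    (hVmono : Monotone V) (hVsub : Submod V) (hVpos : ∀ s', 0 ≤ V s')
    (Q : (Fin N → Bool) → ℝ)
    (hQ : Q = fun a => R s a + γ * ∑ s' : Fin N → Bool, jointP P s a s' * V s') :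
    ∀ a : Fin N → Bool, pulls a ≤ K →
      (1 - (Real.exp 1)⁻¹) * Q a ≤ Q (ind (greedy (fun A => Q (ind A)) K)) := by
  intro a ha
  -- parameter vector
  set pvec : (Fin N → Bool) → Fin N → ℝ := fun b i => P i (s i) (b i) true with hpvec
  have hpb : ∀ b i, 0 ≤ pvec b i ∧ pvec b i ≤ 1 := by
    intro b i
    refine ⟨hPnonneg i (s i) (b i) true, ?_⟩
    have h1 := hPsum i (s i) (b i)
    have h2 := hPnonneg i (s i) (b i) false
    simp only [hpvec]
    linarith
  have hQ' : ∀ b, Q b = R s b + γ * mext V (pvec b) := by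
    intro b
    rw [hQ]
    simp only
    congr 1
    congr 1
    unfold mext jointP
    refine Finset.sum_congr rfl fun x _ => ?_
    congr 1
    refine Finset.prod_congr rfl fun i _ => ?_
    cases hx : x i
    · have := hPsum i (s i) (b i)
      simp only [hpvec, Bool.false_eq_true, if_false]
      linarith
    · simp [hpvec]
  have pvec_mono : ∀ {x y : Fin N → Bool}, x ≤ y → pvec x ≤ pvec y := by
    intro x y hxy i
    have h := hxy i
    cases hx : x i <;> cases hy : y i <;> simp [hpvec, hx, hy]
    · exact hPmono i (s i)
    · rw [hx, hy] at h
      have hfalse : (true : Bool) = false := le_antisymm h (Bool.false_le true)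
      simp at hfalse
  have pvec_sup : ∀ x y : Fin N → Bool, pvec (x ⊔ y) = pvec x ⊔ pvec y := by
    intro x y
    funext i
    have hxy : (x ⊔ y) i = (x i || y i) := rfl
    have hpq : (pvec x ⊔ pvec y) i = pvec x i ⊔ pvec y i := rfl
    rw [hpq]
    cases hx : x i <;> cases hy : y i <;>
      simp [hpvec, hxy, hx, hy, sup_idem]
    · exact hPmono i (s i)
    · exact hPmono i (s i)
  have pvec_inf : ∀ x y : Fin N → Bool, pvec (x ⊓ y) = pvec x ⊓ pvec y := by
    intro x y
    funext i
    have hxy : (x ⊓ y) i = (x i && y i) := rfl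
    have hpq : (pvec x ⊓ pvec y) i = pvec x i ⊓ pvec y i := rfl
    rw [hpq]
    cases hx : x i <;> cases hy : y i <;>
      simp [hpvec, hxy, hx, hy, inf_idem]
    · exact hPmono i (s i)
    · exact hPmono i (s i)
  have Qmono : Monotone Q := by
    intro x y hxy
    rw [hQ' x, hQ' y]
    have h1 := hRmono hxy
    have h2 := mext_mono hVmono (hpb x) (hpb y) (pvec_mono hxy)
    nlinarith
  have Qsub : ∀ x y, Q (x ⊔ y) + Q (x ⊓ y) ≤ Q x + Q y := by
    intro x y
    rw [hQ' (x ⊔ y), hQ' (x ⊓ y), hQ' x, hQ' y]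
    have h1 := hRsub x y
    have h2 := fourfun V V V V hVsub (pvec x) (pvec y) (hpb x) (hpb y)
    rw [pvec_sup, pvec_inf]
    nlinarith
  have Qnn : ∀ b, 0 ≤ Q b := by
    intro b
    rw [hQ' b]
    have := mext_nonneg (hpb b) hVpos
    nlinarith [hRpos b]
  -- set function
  set F : Finset (Fin N) → ℝ := fun A => Q (ind A) with hF
  have ind_mono : ∀ {A B : Finset (Fin N)}, A ⊆ B → ind A ≤ ind B := by
    intro A B hAB i
    by_cases h : i ∈ A
    · simp [ind, h, hAB h]
    · simp [ind, h]
  have ind_union : ∀ A B : Finset (Fin N), ind (A ∪ B) = ind A ⊔ ind B := by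
    intro A B
    funext i
    show decide (i ∈ A ∪ B) = (decide (i ∈ A) || decide (i ∈ B))
    simp [Finset.mem_union]
  have ind_inter : ∀ A B : Finset (Fin N), ind (A ∩ B) = ind A ⊓ ind B := by
    intro A B
    funext i
    show decide (i ∈ A ∩ B) = (decide (i ∈ A) && decide (i ∈ B))
    simp [Finset.mem_inter]
  have Fmono : ∀ {A B : Finset (Fin N)}, A ⊆ B → F A ≤ F B :=
    fun hAB => Qmono (ind_mono hAB)
  have Fsub : ∀ A B, F (A ∪ B) + F (A ∩ B) ≤ F A + F B := by
    intro A B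
    show Q (ind (A ∪ B)) + Q (ind (A ∩ B)) ≤ Q (ind A) + Q (ind B)
    rw [ind_union, ind_inter]
    exact Qsub (ind A) (ind B)
  have Fnn : 0 ≤ F ∅ := Qnn _
  -- the benchmark set
  set B : Finset (Fin N) := Finset.univ.filter (fun i => a i = true) with hBdef
  have hBcard : B.card ≤ K := by
    have : B.card = pulls a := by
      rw [hBdef, Finset.card_filter]
      rfl
    omega
  have hindB : ind B = a := by
    funext i
    cases hai : a i <;> simp [ind, hBdef, Finset.mem_filter, hai]
  have := greedy_approx F (fun {A B} h => Fmono h) Fsub Fnn K hK1 hKN B hBcard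
  rw [hF] at this
  simp only at this
  rw [hindB] at this
  exact this
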